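/- Consider the scalar recursion x⁺ = x − f(x) + u on (0,a], where f satisfies: f continuous on [0,a], 0 < f(z) < z for z ∈ (0,a], f is C¹ on (0,δ̃) with 1 − L ≤ f'(z) ≤ 1 (L ∈ (0,1), δ̃ ∈ (0,a]). Let x* ∈ (0,δ̃) and u* = f(x*). Then for any x ∈ (0,δ̃] and u ∈ [0,u*]: max(0, x − f(x) + u − x*) ≤ L·max(0, x − x*). -/
import Mathlib


open Set

theorem stmt_7 (a δt L : ℝ) (f f' : ℝ → ℝ)
    (ha : 0 < a) (hδt : δt ∈ Ioc 0 a) (hL : L ∈ Ioo (0:ℝ) 1)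
    (hcont : ContinuousOn f (Icc 0 a))
    (hpos : ∀ z ∈ Ioc 0 a, 0 < f z ∧ f z < z)
    (hderiv : ∀ z ∈ Ioo 0 δt, HasDerivAt f (f' z) z)
    (hd1 : ∀ z ∈ Ioo 0 δt, 1 - L ≤ f' z)
    (hd2 : ∀ z ∈ Ioo 0 δt, f' z ≤ 1)
    (xs us : ℝ) (hxs : xs ∈ Ioo 0 δt) (hus : us = f xs) :
    ∀ x ∈ Ioc 0 δt, ∀ u ∈ Icc 0 us,
      max 0 (x - f x + u - xs) ≤ L * max 0 (x - xs) := by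
  intro x hx u hu
  obtain ⟨hx0, hxδ⟩ := hx
  obtain ⟨hxs0, hxsδ⟩ := hxs
  obtain ⟨hL0, hL1⟩ := hL
  have hsub : ∀ b c : ℝ, 0 < b → c ≤ δt → Icc b c ⊆ Icc 0 a :=
    fun b c hb hc => Icc_subset_Icc (le_of_lt hb) (hc.trans hδt.2)
  rcases lt_trichotomy x xs with hlt | heq | hgt
  · -- x < xs : MVT on [x, xs]
    have hc : ContinuousOn f (Icc x xs) :=
      hcont.mono (hsub x xs hx0 hxsδ.le)
    have hdd : ∀ z ∈ Ioo x xs, HasDerivAt f (f' z) z := fun z hz =>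
      hderiv z ⟨hx0.trans hz.1, hz.2.trans hxsδ⟩
    obtain ⟨c, hc1, hc2⟩ := exists_hasDerivAt_eq_slope f f' hlt hc hdd
    have hcmem : c ∈ Ioo 0 δt := ⟨hx0.trans hc1.1, hc1.2.trans hxsδ⟩
    have hfle : f' c ≤ 1 := hd2 c hcmem
    have hkey : x - f x + u - xs ≤ 0 := by
      have : f xs - f x = f' c * (xs - x) := by
        field_simp [sub_ne_zero.mpr (ne_of_gt hlt)] at hc2
        linarith
      nlinarith [hu.2, sub_pos.mpr hlt]
    have hmax : max 0 (x - f x + u - xs) = 0 := max_eq_left hkey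
    rw [hmax]
    positivity
  · -- x = xs
    subst heq
    have hkey : x - f x + u - x ≤ 0 := by
      have := hu.2; rw [hus] at this; linarith
    rw [max_eq_left hkey]
    positivity
  · -- x > xs : MVT on [xs, x]
    have hc : ContinuousOn f (Icc xs x) :=
      hcont.mono (hsub xs x hxs0 hxδ)
    have hdd : ∀ z ∈ Ioo xs x, HasDerivAt f (f' z) z := fun z hz =>
      hderiv z ⟨hxs0.trans hz.1, lt_of_lt_of_le hz.2 hxδ⟩
    obtain ⟨c, hc1, hc2⟩ := exists_hasDerivAt_eq_slope f f' hgt hc hdd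
    have hcmem : c ∈ Ioo 0 δt := ⟨hxs0.trans hc1.1, lt_of_lt_of_le hc1.2 hxδ⟩
    have hfge : 1 - L ≤ f' c := hd1 c hcmem
    have hslope : f x - f xs = f' c * (x - xs) := by
      field_simp [sub_ne_zero.mpr (ne_of_gt hgt)] at hc2
      linarith
    have hRHS : L * max 0 (x - xs) = L * (x - xs) := by
      rw [max_eq_right (by linarith : (0:ℝ) ≤ x - xs)]
    rw [hRHS]
    have h1 : x - f x + u - xs ≤ L * (x - xs) := by
      have := hu.2; rw [hus] at this
      nlinarith [sub_pos.mpr hgt]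
    have h2 : (0:ℝ) ≤ L * (x - xs) := by nlinarith [sub_pos.mpr hgt]
    exact max_le h2 h1
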